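/- Let (X, α) be a finite productive labelled transition system over a finite nonempty alphabet A, let M be a nonempty complete metric space, and let σ be a contraction operator interpretation of A on M. Then for every state x ∈ X, the regular subfractal ⟦x⟧ := σ_ω '' str(x) = { σ_ω(s) | s ∈ str(x) } is a nonempty compact subset of M. -/

import Mathlib

open Filter Topology
open scoped NNReal

/-- `IsTrace α x w` : the word `w` labels a path starting at `x` in the LTS `(X, α)`. -/
inductive IsTrace {X A : Type} (α : X → Set (A × X)) : X → List A → Prop
  | nil (x : X) : IsTrace α x []
  | cons {x y : X} {a : A} {w : List A} :
      (a, y) ∈ α x → IsTrace α y w → IsTrace α x (a :: w)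

/-- The trace set of a state `x`. -/
def tr {X A : Type} (α : X → Set (A × X)) (x : X) : Set (List A) :=
  {w | IsTrace α x w}

/-- The set of streams emitted by a state `x`. -/
def str {X A : Type} (α : X → Set (A × X)) (x : X) : Set (ℕ → A) :=
  {s | ∀ n : ℕ, (List.ofFn fun i : Fin n => s i.val) ∈ tr α x}

/-- `seqApp σ s p n = (σ_{s 0} ∘ σ_{s 1} ∘ ⋯ ∘ σ_{s n}) p`. -/
def seqApp {A M : Type} (σ : A → M → M) (s : ℕ → A) (p : M) (n : ℕ) : M :=
  (List.ofFn fun i : Fin (n + 1) => s i.val).foldr (fun a m => σ a m) p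

section Aux

variable {A M : Type} (σ : A → M → M)

lemma seqApp_zero (s : ℕ → A) (q : M) : seqApp σ s q 0 = σ (s 0) q := by
  simp [seqApp, List.ofFn_succ]

lemma seqApp_back (s : ℕ → A) (q : M) (n : ℕ) :
    seqApp σ s q (n + 1) = seqApp σ s (σ (s (n + 1)) q) n := by
  unfold seqApp
  rw [List.ofFn_succ', List.concat_eq_append, List.foldr_append]
  rfl

lemma seqApp_front (s : ℕ → A) (q : M) (n : ℕ) :
    seqApp σ s q (n + 1) = σ (s 0) (seqApp σ (fun i => s (i + 1)) q n) := by
  simp [seqApp, List.ofFn_succ]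

lemma seqApp_tail (s : ℕ → A) (k n : ℕ) (q : M) :
    seqApp σ s q (n + 1 + k) = seqApp σ s (seqApp σ (fun i => s (n + 1 + i)) q k) n := by
  induction k generalizing q with
  | zero => rw [seqApp_back, seqApp_zero]
  | succ k ih =>
      rw [show n + 1 + (k + 1) = (n + 1 + k) + 1 from rfl, seqApp_back, ih,
        seqApp_back]
      rfl

end Aux

theorem regular_subfractal_nonempty_isCompact {X A M : Type} [Finite X]
    [Fintype A] [Nonempty A]
    [MetricSpace M] [CompleteSpace M] [Nonempty M]
    (α : X → Set (A × X)) (hfin : ∀ x, (α x).Finite) (hprod : ∀ x, α x ≠ ∅)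
    (σ : A → M → M) (c : A → ℝ≥0) (hc : ∀ a, c a < 1)
    (hσ : ∀ a, LipschitzWith (c a) (σ a))
    (σω : (ℕ → A) → M)
    (hσω : ∀ (s : ℕ → A) (p : M), Tendsto (fun n => seqApp σ s p n) atTop (𝓝 (σω s)))
    (x : X) :
    (σω '' str α x).Nonempty ∧ IsCompact (σω '' str α x) := by
  classical
  -- ### Nonemptiness
  have hne : ∀ y : X, (α y).Nonempty := fun y => Set.nonempty_iff_ne_empty.2 (hprod y)
  choose f hf using hne
  let t : ℕ → X := fun n => Nat.rec x (fun _ y => (f y).2) n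
  let s0 : ℕ → A := fun n => (f (t n)).1
  have hkey : ∀ n m, IsTrace α (t m) (List.ofFn fun i : Fin n => s0 (m + i.val)) := by
    intro n
    induction n with
    | zero => intro m; simpa using IsTrace.nil (t m)
    | succ n ih =>
        intro m
        rw [List.ofFn_succ]
        have hmem : (s0 m, t (m + 1)) ∈ α (t m) := by
          have := hf (t m)
          simpa [s0, t] using this
        have htail : IsTrace α (t (m + 1))
            (List.ofFn fun i : Fin n => s0 (m + (i.val + 1))) := by
          have harg : (fun i : Fin n => s0 (m + (i.val + 1))) =
              fun i : Fin n => s0 (m + 1 + i.val) := by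
            funext i; apply congrArg; omega
          rw [harg]
          exact ih (m + 1)
        simpa using IsTrace.cons hmem htail
  have hs0 : s0 ∈ str α x := by
    intro n
    have := hkey n 0
    simp only [Nat.zero_add] at this
    exact this
  -- ### Topology on streams
  letI : TopologicalSpace A := ⊥
  haveI : DiscreteTopology A := ⟨rfl⟩
  have hclosed : IsClosed (str α x) := by
    have hEq : str α x =
        ⋂ n : ℕ, {s : ℕ → A | (List.ofFn fun i : Fin n => s i.val) ∈ tr α x} := by
      ext s; simp [str, Set.mem_iInter]
    rw [hEq]
    refine isClosed_iInter fun n => ?_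
    rw [← isOpen_compl_iff, isOpen_iff_mem_nhds]
    intro u hu
    have hUopen : IsOpen {v : ℕ → A | ∀ i : Fin n, v i.val = u i.val} := by
      have : {v : ℕ → A | ∀ i : Fin n, v i.val = u i.val} =
          ⋂ i : Fin n, (fun v : ℕ → A => v i.val) ⁻¹' {u i.val} := by
        ext v; simp
      rw [this]
      exact isOpen_iInter_of_finite fun i =>
        (continuous_apply _).isOpen_preimage _ (isOpen_discrete _)
    refine Filter.mem_of_superset (hUopen.mem_nhds fun i => rfl) ?_
    intro v hv hcon
    apply hu
    simp only [Set.mem_setOf_eq] at hcon ⊢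
    have hlist : (List.ofFn fun i : Fin n => v i.val) =
        (List.ofFn fun i : Fin n => u i.val) := by
      congr 1; funext i; exact hv i
    rwa [hlist] at hcon
  have hcompactStr : IsCompact (str α x) := hclosed.isCompact
  -- ### Contraction estimates
  set C : ℝ≥0 := Finset.univ.sup c with hC
  have hCa : ∀ a, (c a : ℝ) ≤ (C : ℝ) := fun a => by
    exact_mod_cast Finset.le_sup (Finset.mem_univ a)
  have hC1 : (C : ℝ) < 1 := by
    have : C < 1 := Finset.sup_lt_iff (by norm_num : (⊥ : ℝ≥0) < 1) |>.2 fun a _ => hc a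
    exact_mod_cast this
  have hC0 : (0 : ℝ) ≤ (C : ℝ) := C.coe_nonneg
  obtain ⟨p⟩ := (inferInstance : Nonempty M)
  set K : ℝ := Finset.univ.sup' Finset.univ_nonempty (fun a => dist (σ a p) p) with hKdef
  have hKa : ∀ a, dist (σ a p) p ≤ K := fun a => by
    rw [hKdef]; exact Finset.le_sup' (fun a => dist (σ a p) p) (Finset.mem_univ a)
  have hK0 : 0 ≤ K := le_trans dist_nonneg (hKa (Classical.arbitrary A))
  have h1C : (0 : ℝ) < 1 - C := by linarith
  set B : ℝ := K / (1 - C) with hBdef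
  have hB0 : 0 ≤ B := div_nonneg hK0 (le_of_lt h1C)
  have hKB : K ≤ B := by
    rw [hBdef, le_div_iff₀ h1C]; nlinarith
  have hBeq : (C : ℝ) * B + K = B := by
    rw [hBdef]; field_simp; ring
  -- distance of `seqApp` iterates from `p` is uniformly bounded by `B`
  have hbd : ∀ n (s : ℕ → A), dist (seqApp σ s p n) p ≤ B := by
    intro n
    induction n with
    | zero =>
        intro s; rw [seqApp_zero]; exact le_trans (hKa (s 0)) hKB
    | succ n ih =>
        intro s
        rw [seqApp_front]
        set Q := seqApp σ (fun i => s (i + 1)) p n with hQ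
        calc dist (σ (s 0) Q) p ≤ dist (σ (s 0) Q) (σ (s 0) p) + dist (σ (s 0) p) p :=
              dist_triangle _ _ _
          _ ≤ (c (s 0) : ℝ) * dist Q p + K := by
              gcongr
              · exact (hσ (s 0)).dist_le_mul _ _
              · exact hKa (s 0)
          _ ≤ (C : ℝ) * B + K := by
              have h1 : (c (s 0) : ℝ) * dist Q p ≤ (C : ℝ) * B := by
                have := ih (fun i => s (i + 1))
                have hd0 : (0:ℝ) ≤ dist Q p := dist_nonneg
                nlinarith [hCa (s 0), (c (s 0)).coe_nonneg]
              linarith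
          _ = B := hBeq
  -- iterated contraction bound
  have hcontr : ∀ n (s : ℕ → A) (q q' : M),
      dist (seqApp σ s q n) (seqApp σ s q' n) ≤ (C : ℝ) ^ (n + 1) * dist q q' := by
    intro n
    induction n with
    | zero =>
        intro s q q'
        rw [seqApp_zero, seqApp_zero, pow_one]
        exact le_trans ((hσ (s 0)).dist_le_mul _ _)
          (mul_le_mul_of_nonneg_right (hCa (s 0)) dist_nonneg)
    | succ n ih =>
        intro s q q'
        rw [seqApp_front, seqApp_front]
        calc dist (σ (s 0) _) (σ (s 0) _) ≤ (c (s 0) : ℝ) * _ := (hσ (s 0)).dist_le_mul _ _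
          _ ≤ (C : ℝ) * ((C : ℝ) ^ (n + 1) * dist q q') := by
              have := ih (fun i => s (i + 1)) q q'
              have := hCa (s 0)
              have hd : (0:ℝ) ≤ dist (seqApp σ (fun i => s (i+1)) q n)
                  (seqApp σ (fun i => s (i+1)) q' n) := dist_nonneg
              nlinarith [(c (s 0)).coe_nonneg, pow_nonneg hC0 (n+1), dist_nonneg (x := q) (y := q')]
          _ = (C : ℝ) ^ (n + 1 + 1) * dist q q' := by ring
  -- distance of the limit from the `n`-th iterate
  have hlim : ∀ (s : ℕ → A) (n : ℕ),
      dist (σω s) (seqApp σ s p n) ≤ (C : ℝ) ^ (n + 1) * B := by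
    intro s n
    have htend : Tendsto (fun m => dist (seqApp σ s p m) (seqApp σ s p n)) atTop
        (𝓝 (dist (σω s) (seqApp σ s p n))) :=
      (hσω s p).dist tendsto_const_nhds
    refine le_of_tendsto htend ?_
    filter_upwards [eventually_ge_atTop (n + 1)] with m hm
    obtain ⟨k, rfl⟩ : ∃ k, m = n + 1 + k := ⟨m - (n + 1), by omega⟩
    rw [seqApp_tail]
    calc dist (seqApp σ s (seqApp σ (fun i => s (n+1+i)) p k) n) (seqApp σ s p n)
        ≤ (C : ℝ) ^ (n + 1) * dist (seqApp σ (fun i => s (n+1+i)) p k) p := by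
          have := hcontr n s (seqApp σ (fun i => s (n+1+i)) p k) p
          simpa using this
      _ ≤ (C : ℝ) ^ (n + 1) * B := by
          gcongr
          exact hbd k _
  -- σω is continuous
  have hclose : ∀ (s v : ℕ → A) (n : ℕ), (∀ i : Fin (n + 1), v i.val = s i.val) →
      dist (σω v) (σω s) ≤ 2 * ((C : ℝ) ^ (n + 1) * B) := by
    intro s v n hvs
    have heqn : seqApp σ v p n = seqApp σ s p n := by
      unfold seqApp
      have harg : (fun i : Fin (n + 1) => v i.val) = fun i : Fin (n + 1) => s i.val :=
        funext fun i => hvs i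
      rw [harg]
    calc dist (σω v) (σω s) ≤ dist (σω v) (seqApp σ v p n) + dist (seqApp σ s p n) (σω s) := by
          rw [heqn]; exact dist_triangle _ _ _
      _ ≤ (C : ℝ) ^ (n + 1) * B + (C : ℝ) ^ (n + 1) * B := by
          gcongr
          · exact hlim v n
          · rw [dist_comm]; exact hlim s n
      _ = 2 * ((C : ℝ) ^ (n + 1) * B) := by ring
  have hcont : Continuous σω := by
    rw [continuous_iff_continuousAt]
    intro s
    rw [ContinuousAt, Metric.tendsto_nhds]
    intro ε hε
    have htz : Tendsto (fun n : ℕ => 2 * ((C : ℝ) ^ (n + 1) * B)) atTop (𝓝 0) := by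
      have h := tendsto_pow_atTop_nhds_zero_of_lt_one hC0 hC1
      have h2 : Tendsto (fun n : ℕ => (C : ℝ) ^ (n + 1)) atTop (𝓝 0) :=
        h.comp (tendsto_add_atTop_nat 1)
      have := (h2.mul_const B).const_mul 2
      simpa using this
    obtain ⟨n, hn⟩ := (htz.eventually (gt_mem_nhds hε)).exists
    have hUopen : IsOpen {v : ℕ → A | ∀ i : Fin (n + 1), v i.val = s i.val} := by
      have : {v : ℕ → A | ∀ i : Fin (n + 1), v i.val = s i.val} =
          ⋂ i : Fin (n + 1), (fun v : ℕ → A => v i.val) ⁻¹' {s i.val} := by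
        ext v; simp
      rw [this]
      exact isOpen_iInter_of_finite fun i =>
        (continuous_apply _).isOpen_preimage _ (isOpen_discrete _)
    filter_upwards [hUopen.mem_nhds fun i => rfl] with v hv
    exact lt_of_le_of_lt (hclose s v n hv) hn
  exact ⟨⟨σω s0, Set.mem_image_of_mem _ hs0⟩, hcompactStr.image hcont⟩
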